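/- For the Cesàro matrix C of order α with 0 < α ≤ 1, setting φ_n = 1/A_n^α = c_{nn}, one has Σ_{v=0}^n |c_{vv} ĉ_{n,v+1}| = O(φ_n) as n → ∞. -/

import Mathlib

/-- The Cesàro number `A_n^α = Γ(n+α+1)/(Γ(α+1)Γ(n+1))`. -/
noncomputable def cesaroNum (α : ℝ) (n : ℕ) : ℝ :=
  Real.Gamma (n + α + 1) / (Real.Gamma (α + 1) * Real.Gamma (n + 1))

lemma cesaro_pos {β : ℝ} (hβ : -1 < β) (n : ℕ) : 0 < cesaroNum β n := by
  have h0 : (0:ℝ) < (n:ℝ) + β + 1 := by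
    have := Nat.cast_nonneg (α := ℝ) n; linarith
  exact div_pos (Real.Gamma_pos_of_pos h0)
    (mul_pos (Real.Gamma_pos_of_pos (by linarith))
      (Real.Gamma_pos_of_pos (by positivity)))

lemma cesaro_zero {β : ℝ} (hβ : -1 < β) : cesaroNum β 0 = 1 := by
  have h : Real.Gamma (β+1) ≠ 0 := ne_of_gt (Real.Gamma_pos_of_pos (by linarith))
  unfold cesaroNum
  push_cast
  rw [show (0:ℝ)+β+1 = β+1 by ring, show (0:ℝ)+1 = 1 by ring, Real.Gamma_one]
  field_simp

lemma cesaro_succ {β : ℝ} (hβ : -1 < β) (n : ℕ) :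
    cesaroNum β (n+1) = cesaroNum β n * (((n:ℝ)+1+β)/((n:ℝ)+1)) := by
  have hn0 : (0:ℝ) ≤ (n:ℝ) := Nat.cast_nonneg n
  have hn1 : ((n:ℝ)+β+1) ≠ 0 := ne_of_gt (by linarith)
  have hn2 : ((n:ℝ)+1) ≠ 0 := by positivity
  have hg1 : Real.Gamma ((n:ℝ)+β+1) ≠ 0 := ne_of_gt (Real.Gamma_pos_of_pos (by linarith))
  have hg2 : Real.Gamma (β+1) ≠ 0 := ne_of_gt (Real.Gamma_pos_of_pos (by linarith))
  have hg3 : Real.Gamma ((n:ℝ)+1) ≠ 0 := ne_of_gt (Real.Gamma_pos_of_pos (by linarith))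
  unfold cesaroNum
  push_cast
  rw [show (n:ℝ)+1+β+1 = ((n:ℝ)+β+1)+1 by ring, Real.Gamma_add_one hn1,
      show (n:ℝ)+1+1 = ((n:ℝ)+1)+1 by ring, Real.Gamma_add_one hn2]
  field_simp
  ring

lemma cesaro_shift {α : ℝ} (hα : 0 < α) (m : ℕ) :
    ((m:ℝ) + α) * cesaroNum (α-1) m = α * cesaroNum α m := by
  have hm0 : (0:ℝ) ≤ (m:ℝ) := Nat.cast_nonneg m
  have hma : ((m:ℝ)+α) ≠ 0 := ne_of_gt (by linarith)
  have hg1 : Real.Gamma ((m:ℝ)+α) ≠ 0 := ne_of_gt (Real.Gamma_pos_of_pos (by linarith))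
  have hg2 : Real.Gamma α ≠ 0 := ne_of_gt (Real.Gamma_pos_of_pos hα)
  have hg3 : Real.Gamma ((m:ℝ)+1) ≠ 0 := ne_of_gt (Real.Gamma_pos_of_pos (by linarith))
  unfold cesaroNum
  rw [show (m:ℝ)+(α-1)+1 = (m:ℝ)+α by ring, show (α-1)+1 = α by ring,
      show (m:ℝ)+α+1 = ((m:ℝ)+α)+1 by ring, Real.Gamma_add_one hma,
      show α+1 = α+1 from rfl, Real.Gamma_add_one (ne_of_gt hα)]
  field_simp

lemma cesaro_sum {α : ℝ} (hα0 : 0 < α) (m : ℕ) :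
    ∑ k ∈ Finset.range (m+1), cesaroNum (α-1) k = cesaroNum α m := by
  have hβ : (-1:ℝ) < α - 1 := by linarith
  have hα' : (-1:ℝ) < α := by linarith
  induction m with
  | zero => simp [cesaro_zero hβ, cesaro_zero hα']
  | succ m ih =>
    rw [Finset.sum_range_succ, ih, cesaro_succ hβ m, cesaro_succ hα' m]
    have hid := cesaro_shift hα0 m
    have hm2 : ((m:ℝ)+1) ≠ 0 := by positivity
    field_simp
    nlinarith [hid]

lemma cesaro_key {α : ℝ} (hα0 : 0 < α) (hα1 : α ≤ 1) {v n : ℕ} (h : v ≤ n) :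
    ((v:ℝ)+1) * cesaroNum α n ≤ ((n:ℝ)+1) * cesaroNum α v := by
  have hα' : (-1:ℝ) < α := by linarith
  induction n, h using Nat.le_induction with
  | base => exact le_refl _
  | succ n hvn ih =>
    have hAv : 0 < cesaroNum α v := cesaro_pos hα' v
    have hn0 : (0:ℝ) ≤ (n:ℝ) := Nat.cast_nonneg n
    have hn1 : (0:ℝ) < (n:ℝ)+1 := by linarith
    rw [cesaro_succ hα' n]
    push_cast
    have hr : (0:ℝ) ≤ ((n:ℝ)+1+α)/((n:ℝ)+1) := by positivity
    calc ((v:ℝ)+1) * (cesaroNum α n * (((n:ℝ)+1+α)/((n:ℝ)+1)))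
        = (((v:ℝ)+1) * cesaroNum α n) * (((n:ℝ)+1+α)/((n:ℝ)+1)) := by ring
      _ ≤ (((n:ℝ)+1) * cesaroNum α v) * (((n:ℝ)+1+α)/((n:ℝ)+1)) :=
          mul_le_mul_of_nonneg_right ih hr
      _ = cesaroNum α v * ((n:ℝ)+1+α) := by field_simp
      _ ≤ ((n:ℝ)+1+1) * cesaroNum α v := by nlinarith


/-- For the Cesàro matrix of order `0 < α ≤ 1`, with `φ_n = 1/A_n^α = c_{nn}`,
one has `Σ_{v=0}^n |c_{vv} ĉ_{n,v+1}| = O(φ_n)`. -/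
theorem cesaro_diag_hat_sum_bound (α : ℝ) (hα0 : 0 < α) (hα1 : α ≤ 1)
    (c chat : ℕ → ℕ → ℝ)
    (hc : ∀ n v : ℕ, v ≤ n → c n v = cesaroNum (α - 1) (n - v) / cesaroNum α n)
    (hchat : ∀ n i : ℕ, 1 ≤ i → i ≤ n →
      chat n i = (i : ℝ) * cesaroNum (α - 1) (n - i) / ((n : ℝ) * cesaroNum α n))
    (hchat0 : ∀ n i : ℕ, n < i → chat n i = 0) :
    ∃ C : ℝ, ∀ n : ℕ, 1 ≤ n →
      ∑ v ∈ Finset.range (n + 1), |c v v * chat n (v + 1)| ≤ C * (1 / cesaroNum α n) := by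
  have hα' : (-1:ℝ) < α := by linarith
  have hβ : (-1:ℝ) < α - 1 := by linarith
  refine ⟨2, fun n hn => ?_⟩
  have hAn : 0 < cesaroNum α n := cesaro_pos hα' n
  have hnR : (0:ℝ) < (n:ℝ) := by exact_mod_cast hn
  set K : ℝ := ((n:ℝ)+1)/((n:ℝ) * cesaroNum α n * cesaroNum α n) with hK
  have hKpos : 0 < K := by positivity
  -- drop the last (zero) term
  have hsplit : ∑ v ∈ Finset.range (n+1), |c v v * chat n (v+1)|
      = ∑ v ∈ Finset.range n, |c v v * chat n (v+1)| := by
    rw [Finset.sum_range_succ, hchat0 n (n+1) (by omega), mul_zero, abs_zero, add_zero]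
  rw [hsplit]
  -- termwise bound
  have hterm : ∀ v ∈ Finset.range n, |c v v * chat n (v+1)|
      ≤ K * cesaroNum (α-1) (n-1-v) := by
    intro v hv
    rw [Finset.mem_range] at hv
    have hAv : 0 < cesaroNum α v := cesaro_pos hα' v
    have hA' : 0 < cesaroNum (α-1) (n-1-v) := cesaro_pos hβ _
    have hcvv : c v v = 1 / cesaroNum α v := by
      rw [hc v v le_rfl, Nat.sub_self, cesaro_zero hβ]
    have hch : chat n (v+1) = ((v:ℝ)+1) * cesaroNum (α-1) (n-1-v) / ((n:ℝ) * cesaroNum α n) := by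
      rw [hchat n (v+1) (by omega) (by omega), show n - (v+1) = n-1-v by omega]
      push_cast
      ring
    rw [hcvv, hch, abs_of_nonneg (by positivity)]
    have hkey := cesaro_key hα0 hα1 (le_of_lt hv)
    have hAv' : cesaroNum α v ≠ 0 := ne_of_gt hAv
    have hAn' : cesaroNum α n ≠ 0 := ne_of_gt hAn
    have hn' : (n:ℝ) ≠ 0 := ne_of_gt hnR
    have e1 : 1 / cesaroNum α v * (((v:ℝ)+1) * cesaroNum (α-1) (n-1-v) / ((n:ℝ) * cesaroNum α n))
        = (((v:ℝ)+1) * cesaroNum α n) *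
          (cesaroNum (α-1) (n-1-v) / ((n:ℝ) * cesaroNum α n * cesaroNum α n * cesaroNum α v)) := by
      field_simp
    have e2 : K * cesaroNum (α-1) (n-1-v)
        = (((n:ℝ)+1) * cesaroNum α v) *
          (cesaroNum (α-1) (n-1-v) / ((n:ℝ) * cesaroNum α n * cesaroNum α n * cesaroNum α v)) := by
      rw [hK]; field_simp
    rw [e1, e2]
    exact mul_le_mul_of_nonneg_right hkey (by positivity)
  calc ∑ v ∈ Finset.range n, |c v v * chat n (v+1)|
      ≤ ∑ v ∈ Finset.range n, K * cesaroNum (α-1) (n-1-v) := Finset.sum_le_sum hterm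
    _ = K * ∑ v ∈ Finset.range n, cesaroNum (α-1) (n-1-v) := by rw [Finset.mul_sum]
    _ = K * ∑ v ∈ Finset.range n, cesaroNum (α-1) v := by
        rw [Finset.sum_range_reflect (fun k => cesaroNum (α-1) k) n]
    _ = K * cesaroNum α (n-1) := by
        rw [show n = (n-1)+1 by omega, Nat.add_sub_cancel, cesaro_sum hα0]
    _ ≤ K * cesaroNum α n := by
        apply mul_le_mul_of_nonneg_left _ (le_of_lt hKpos)
        calc cesaroNum α (n-1) ≤ cesaroNum α (n-1) * ((((n-1:ℕ):ℝ)+1+α)/(((n-1:ℕ):ℝ)+1)) := by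
              have h0 : (0:ℝ) ≤ ((n-1:ℕ):ℝ) := Nat.cast_nonneg _
              have hp : 0 < cesaroNum α (n-1) := cesaro_pos hα' _
              have hfac : (1:ℝ) ≤ (((n-1:ℕ):ℝ)+1+α)/(((n-1:ℕ):ℝ)+1) := by
                rw [le_div_iff₀ (by linarith)]; linarith
              nlinarith
          _ = cesaroNum α ((n-1)+1) := (cesaro_succ hα' (n-1)).symm
          _ = cesaroNum α n := by rw [show (n-1)+1 = n by omega]
    _ ≤ 2 * (1 / cesaroNum α n) := by
        rw [hK, mul_one_div, div_mul_eq_mul_div, div_le_div_iff₀ (by positivity) hAn]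
        have hn1 : (1:ℝ) ≤ (n:ℝ) := by exact_mod_cast hn
        nlinarith [mul_pos hAn hAn]
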